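/- arXiv:1803.10023 — 3 statements merged into one kernel-verified Lean document; each statement's English description precedes it below -/
import Mathlib

section
/- Let E ⊂ ℝⁿ, θ ∈ Sⁿ⁻¹, α ∈ (0, π/2) and r > 0 be such that for every x ∈ E the set C(x,θ,α) ∩ B(x,r) ∩ E is empty, where C(x,θ,α) = {y : ⟨y−x,θ⟩ > cos(α)|y−x|}. Then for every x₀ ∈ ℝⁿ the set E ∩ B(x₀, r/2) is contained in a Lipschitz graph over the hyperplane θ^⊥; in particular, E is (n−1)-rectifiable. -/
open MeasureTheory Metric

def IsRectifiableOfDim (k : ℕ) {X : Type*} [MetricSpace X] (A : Set X) : Prop :=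
  ∃ (E : ℕ → Set (EuclideanSpace ℝ (Fin k))) (f : ℕ → EuclideanSpace ℝ (Fin k) → X),
    (∀ i, MeasurableSet (E i)) ∧ (∀ i, ∃ K : NNReal, LipschitzOnWith K (f i) (E i)) ∧
    A ⊆ ⋃ i, f i '' E i

/-- The open cone at `x` in direction `θ` with opening angle `α`. -/
def openCone {n : ℕ} (x θ : EuclideanSpace ℝ (Fin n)) (α : ℝ) :
    Set (EuclideanSpace ℝ (Fin n)) :=
  {y | (inner ℝ (y - x) θ : ℝ) > Real.cos α * ‖y - x‖}

/-- Component of `x` orthogonal to `θ`. -/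
noncomputable def projPerp {n : ℕ} (θ x : EuclideanSpace ℝ (Fin n)) :
    EuclideanSpace ℝ (Fin n) := x - (inner ℝ x θ : ℝ) • θ

lemma projPerp_mem {n : ℕ} {θ : EuclideanSpace ℝ (Fin n)} (hθ : ‖θ‖ = 1)
    (x : EuclideanSpace ℝ (Fin n)) : projPerp θ x ∈ (Submodule.span ℝ {θ})ᗮ := by
  rw [Submodule.mem_orthogonal_singleton_iff_inner_right]
  have : (inner ℝ θ θ : ℝ) = 1 := by
    rw [real_inner_self_eq_norm_sq, hθ]; norm_num
  simp [projPerp, inner_sub_right, inner_smul_right, this, real_inner_comm θ x, hθ]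

lemma projPerp_sub {n : ℕ} (θ x y : EuclideanSpace ℝ (Fin n)) :
    projPerp θ (x - y) = projPerp θ x - projPerp θ y := by
  simp only [projPerp, inner_sub_left, sub_smul]
  abel

/-- Key quantitative lemma: if `|⟪w,θ⟫| ≤ cos α ‖w‖` then
`|⟪w,θ⟫| ≤ (cos α / sin α) ‖projPerp θ w‖`. -/
lemma abs_inner_le_of_cone {n : ℕ} {θ : EuclideanSpace ℝ (Fin n)} (hθ : ‖θ‖ = 1)
    {α : ℝ} (hα : α ∈ Set.Ioo 0 (Real.pi / 2)) {w : EuclideanSpace ℝ (Fin n)}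
    (h : |(inner ℝ w θ : ℝ)| ≤ Real.cos α * ‖w‖) :
    |(inner ℝ w θ : ℝ)| ≤ (Real.cos α / Real.sin α) * ‖projPerp θ w‖ := by
  set c := Real.cos α with hc
  set s := Real.sin α with hs
  have hspos : 0 < s := Real.sin_pos_of_pos_of_lt_pi hα.1
    (lt_trans hα.2 (by linarith [Real.pi_pos]))
  have hcpos : 0 < c := Real.cos_pos_of_mem_Ioo
    ⟨by linarith [Real.pi_pos, hα.1], hα.2⟩
  set t : ℝ := (inner ℝ w θ : ℝ) with ht
  have hθθ : (inner ℝ θ θ : ℝ) = 1 := by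
    rw [real_inner_self_eq_norm_sq, hθ]; norm_num
  have horth : (inner ℝ (projPerp θ w) ((t : ℝ) • θ) : ℝ) = 0 := by
    simp [projPerp, inner_sub_left, inner_smul_left, inner_smul_right, hθθ, ← ht, hθ]
  have hdecomp : w = projPerp θ w + t • θ := by
    simp only [projPerp, ht]; abel
  have hnsq : ‖w‖ ^ 2 = ‖projPerp θ w‖ ^ 2 + t ^ 2 := by
    conv_lhs => rw [hdecomp]
    rw [norm_add_sq_real, horth, norm_smul, hθ]
    simp [mul_pow, sq_abs]
  have hpyth : t ^ 2 ≤ c ^ 2 * (‖projPerp θ w‖ ^ 2 + t ^ 2) := by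
    have h1 : |t| ^ 2 ≤ (c * ‖w‖) ^ 2 := by
      apply pow_le_pow_left₀ (abs_nonneg _) h
    rw [sq_abs] at h1
    calc t ^ 2 ≤ (c * ‖w‖) ^ 2 := h1
      _ = c ^ 2 * ‖w‖ ^ 2 := by ring
      _ = c ^ 2 * (‖projPerp θ w‖ ^ 2 + t ^ 2) := by rw [hnsq]
  have hsc : s ^ 2 + c ^ 2 = 1 := by
    rw [hs, hc]; exact Real.sin_sq_add_cos_sq α
  have key : (|t| * s) ^ 2 ≤ (c * ‖projPerp θ w‖) ^ 2 := by
    have : t ^ 2 * s ^ 2 ≤ c ^ 2 * ‖projPerp θ w‖ ^ 2 := by nlinarith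
    calc (|t| * s) ^ 2 = t ^ 2 * s ^ 2 := by rw [mul_pow, sq_abs]
      _ ≤ c ^ 2 * ‖projPerp θ w‖ ^ 2 := this
      _ = (c * ‖projPerp θ w‖) ^ 2 := by ring
  have key2 : |t| * s ≤ c * ‖projPerp θ w‖ := by
    have h1 : 0 ≤ |t| * s := mul_nonneg (abs_nonneg _) hspos.le
    have h2 : 0 ≤ c * ‖projPerp θ w‖ := mul_nonneg hcpos.le (norm_nonneg _)
    nlinarith
  rw [div_mul_eq_mul_div, le_div_iff₀ hspos]
  linarith

theorem cone_condition_implies_lipschitz_graph {n : ℕ}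
    (E : Set (EuclideanSpace ℝ (Fin n))) (θ : EuclideanSpace ℝ (Fin n)) (hθ : ‖θ‖ = 1)
    (α : ℝ) (hα : α ∈ Set.Ioo 0 (Real.pi / 2)) (r : ℝ) (hr : 0 < r)
    (hcone : ∀ x ∈ E, openCone x θ α ∩ ball x r ∩ E = ∅) :
    (∀ x₀ : EuclideanSpace ℝ (Fin n),
      ∃ (f : (Submodule.span ℝ {θ})ᗮ → ℝ) (K : NNReal), LipschitzWith K f ∧
        E ∩ ball x₀ (r / 2) ⊆
          Set.range (fun v : (Submodule.span ℝ {θ})ᗮ =>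
            (v : EuclideanSpace ℝ (Fin n)) + f v • θ)) ∧
    IsRectifiableOfDim (n - 1) E := by
  have hspos : 0 < Real.sin α := Real.sin_pos_of_pos_of_lt_pi hα.1
    (lt_trans hα.2 (by linarith [Real.pi_pos]))
  have hcpos : 0 < Real.cos α := Real.cos_pos_of_mem_Ioo
    ⟨by linarith [Real.pi_pos, hα.1], hα.2⟩
  -- the cone condition gives two-sided bound
  have habs : ∀ x ∈ E, ∀ y ∈ E, dist x y < r →
      |(inner ℝ (x - y) θ : ℝ)| ≤ Real.cos α * ‖x - y‖ := by
    intro x hx y hy hd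
    have h1 : ¬ ((inner ℝ (y - x) θ : ℝ) > Real.cos α * ‖y - x‖) := by
      intro hgt
      have : y ∈ openCone x θ α ∩ ball x r ∩ E :=
        ⟨⟨hgt, by rw [mem_ball, dist_comm]; exact hd⟩, hy⟩
      rw [hcone x hx] at this
      exact this
    have h2 : ¬ ((inner ℝ (x - y) θ : ℝ) > Real.cos α * ‖x - y‖) := by
      intro hgt
      have : x ∈ openCone y θ α ∩ ball y r ∩ E :=
        ⟨⟨hgt, mem_ball.mpr hd⟩, hx⟩
      rw [hcone y hy] at this
      exact this
    push_neg at h1 h2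
    rw [abs_le]
    constructor
    · have : (inner ℝ (y - x) θ : ℝ) = -(inner ℝ (x - y) θ : ℝ) := by
        rw [← inner_neg_left]; congr 1; abel
      rw [this] at h1
      have hnorm : ‖y - x‖ = ‖x - y‖ := by rw [← norm_neg]; congr 1; abel
      rw [hnorm] at h1
      linarith
    · exact h2
  -- Lipschitz bound for heights vs projections
  have hkey : ∀ x ∈ E, ∀ y ∈ E, dist x y < r →
      |(inner ℝ (x - y) θ : ℝ)| ≤ (Real.cos α / Real.sin α) * ‖projPerp θ x - projPerp θ y‖ := by
    intro x hx y hy hd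
    rw [← projPerp_sub]
    exact abs_inner_le_of_cone hθ hα (habs x hx y hy hd)
  set K : NNReal := Real.toNNReal (Real.cos α / Real.sin α) with hK
  have hKcoe : (K : ℝ) = Real.cos α / Real.sin α :=
    Real.coe_toNNReal _ (div_nonneg hcpos.le hspos.le)
  -- main pointwise statement
  have main : ∀ x₀ : EuclideanSpace ℝ (Fin n),
      ∃ (f : (Submodule.span ℝ {θ})ᗮ → ℝ), LipschitzWith K f ∧
        E ∩ ball x₀ (r / 2) ⊆
          Set.range (fun v : (Submodule.span ℝ {θ})ᗮ =>
            (v : EuclideanSpace ℝ (Fin n)) + f v • θ) := by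
    intro x₀
    classical
    set B := E ∩ ball x₀ (r / 2) with hB
    have hdistB : ∀ x ∈ B, ∀ y ∈ B, dist x y < r := by
      intro x hx y hy
      calc dist x y ≤ dist x x₀ + dist x₀ y := dist_triangle _ _ _
        _ < r / 2 + r / 2 := by
            have h1 : dist x x₀ < r / 2 := mem_ball.mp hx.2
            have h2 : dist x₀ y < r / 2 := by rw [dist_comm]; exact mem_ball.mp hy.2
            linarith
        _ = r := by ring
    set S : Set ((Submodule.span ℝ {θ})ᗮ : Submodule ℝ (EuclideanSpace ℝ (Fin n))) :=
      {v | ∃ x ∈ B, projPerp θ x = (v : EuclideanSpace ℝ (Fin n))} with hS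
    set h : ((Submodule.span ℝ {θ})ᗮ : Submodule ℝ (EuclideanSpace ℝ (Fin n))) → ℝ :=
      fun v => if hv : ∃ x ∈ B, projPerp θ x = (v : EuclideanSpace ℝ (Fin n)) then
        (inner ℝ hv.choose θ : ℝ) else 0 with hh
    have hlip : LipschitzOnWith K h S := by
      rw [lipschitzOnWith_iff_dist_le_mul]
      rintro u hu v hv
      have hu' : ∃ x ∈ B, projPerp θ x = (u : EuclideanSpace ℝ (Fin n)) := hu
      have hv' : ∃ x ∈ B, projPerp θ x = (v : EuclideanSpace ℝ (Fin n)) := hv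
      have hx := hu'.choose_spec
      have hy := hv'.choose_spec
      set x := hu'.choose
      set y := hv'.choose
      have : h u = (inner ℝ x θ : ℝ) := by rw [hh]; simp only [dif_pos hu']; rfl
      rw [this]
      have : h v = (inner ℝ y θ : ℝ) := by rw [hh]; simp only [dif_pos hv']; rfl
      rw [this]
      rw [Real.dist_eq, ← inner_sub_left]
      have := hkey x hx.1.1 y hy.1.1 (hdistB x hx.1 y hy.1)
      rw [hx.2, hy.2] at this
      calc |(inner ℝ (x - y) θ : ℝ)| ≤ (Real.cos α / Real.sin α) *
            ‖(u : EuclideanSpace ℝ (Fin n)) - (v : EuclideanSpace ℝ (Fin n))‖ := this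
        _ = (K : ℝ) * dist u v := by
            rw [hKcoe, Subtype.dist_eq, dist_eq_norm]
    obtain ⟨f, hf, hfe⟩ := hlip.extend_real
    refine ⟨f, hf, ?_⟩
    rintro x hx
    have hmem : projPerp θ x ∈ (Submodule.span ℝ {θ})ᗮ := projPerp_mem hθ x
    set v : ((Submodule.span ℝ {θ})ᗮ : Submodule ℝ (EuclideanSpace ℝ (Fin n))) :=
      ⟨projPerp θ x, hmem⟩ with hv
    have hvS : ∃ y ∈ B, projPerp θ y = (v : EuclideanSpace ℝ (Fin n)) := ⟨x, hx, rfl⟩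
    have hvalue : h v = (inner ℝ x θ : ℝ) := by
      rw [hh]; simp only [dif_pos hvS]
      set y := hvS.choose
      have hy := hvS.choose_spec
      have hdiff := hkey y hy.1.1 x hx.1 (hdistB y hy.1 x hx)
      have : projPerp θ y - projPerp θ x = 0 := by
        rw [hy.2]; simp [hv]
      rw [this, norm_zero, mul_zero, abs_nonpos_iff, inner_sub_left, sub_eq_zero] at hdiff
      exact hdiff
    refine ⟨v, ?_⟩
    show (v : EuclideanSpace ℝ (Fin n)) + f v • θ = x
    have hvS' : v ∈ S := hvS
    have hfv : f v = (inner ℝ x θ : ℝ) := by rw [← hfe hvS', hvalue]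
    rw [hfv]
    show projPerp θ x + (inner ℝ x θ : ℝ) • θ = x
    simp [projPerp]
  refine ⟨fun x₀ => ⟨(main x₀).choose, K, (main x₀).choose_spec⟩, ?_⟩
  -- Rectifiability
  set V : Submodule ℝ (EuclideanSpace ℝ (Fin n)) := (Submodule.span ℝ {θ})ᗮ with hV
  have hθne : θ ≠ 0 := by intro h; rw [h, norm_zero] at hθ; norm_num at hθ
  have hrank : Module.finrank ℝ V = n - 1 := by
    have h1 : Module.finrank ℝ (Submodule.span ℝ {θ}) = 1 := finrank_span_singleton hθne
    have h2 := Submodule.finrank_add_finrank_orthogonal (Submodule.span ℝ {θ})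
    rw [h1, finrank_euclideanSpace_fin] at h2
    rw [hV]
    omega
  set e : V ≃ₗᵢ[ℝ] EuclideanSpace ℝ (Fin (n - 1)) :=
    ((stdOrthonormalBasis ℝ V).reindex (finCongr hrank)).repr with he
  set u := TopologicalSpace.denseSeq (EuclideanSpace ℝ (Fin n)) with hu
  set F : ℕ → ((Submodule.span ℝ {θ})ᗮ : Submodule ℝ (EuclideanSpace ℝ (Fin n))) → ℝ :=
    fun i => (main (u i)).choose with hF
  have hFlip : ∀ i, LipschitzWith K (F i) := fun i => (main (u i)).choose_spec.1
  have hFrange : ∀ i, E ∩ ball (u i) (r / 2) ⊆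
      Set.range (fun v : (Submodule.span ℝ {θ})ᗮ =>
        (v : EuclideanSpace ℝ (Fin n)) + F i v • θ) :=
    fun i => (main (u i)).choose_spec.2
  set g : ℕ → EuclideanSpace ℝ (Fin (n - 1)) → EuclideanSpace ℝ (Fin n) :=
    fun i w => ((e.symm w : V) : EuclideanSpace ℝ (Fin n)) + F i (e.symm w) • θ with hg
  refine ⟨fun _ => Set.univ, g, fun i => MeasurableSet.univ, ?_, ?_⟩
  · intro i
    refine ⟨(1 + K) * 1, ?_⟩
    have h1 : LipschitzWith 1 (fun v : V => (v : EuclideanSpace ℝ (Fin n))) :=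
      isometry_subtype_coe.lipschitz
    have h2 : LipschitzWith K (fun v : V => F i v • θ) := by
      apply LipschitzWith.of_dist_le_mul
      intro a b
      rw [dist_eq_norm, ← sub_smul, norm_smul, hθ, mul_one]
      exact (hFlip i).dist_le_mul a b
    have h3 : LipschitzWith (1 + K)
        (fun v : V => (v : EuclideanSpace ℝ (Fin n)) + F i v • θ) := h1.add h2
    have h4 : LipschitzWith 1 (e.symm : EuclideanSpace ℝ (Fin (n - 1)) → V) :=
      e.symm.isometry.lipschitz
    exact (h3.comp h4).lipschitzOnWith
  · intro x hx
    obtain ⟨i, hi⟩ := (TopologicalSpace.denseRange_denseSeq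
      (EuclideanSpace ℝ (Fin n))).exists_dist_lt x (by linarith : (0:ℝ) < r / 2)
    have hxB : x ∈ E ∩ ball (u i) (r / 2) := ⟨hx, mem_ball.mpr hi⟩
    obtain ⟨v, hv⟩ := hFrange i hxB
    refine Set.mem_iUnion.mpr ⟨i, ?_⟩
    rw [Set.image_univ]
    exact ⟨e v, by simp [hg, hv]⟩
end

section
/- Let X be a complete separable geodesic metric space and let Γ ⊂ X × X be a c-cyclically monotone set for the cost c(x,y) = d(x,y)². Then for every t ∈ [0,1] the set Γ_t = {(γ(0), γ(t)) : γ is a constant-speed geodesic from [0,1] to X with (γ(0), γ(1)) ∈ Γ} is c-cyclically monotone. -/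
open Set

/-- A constant-speed geodesic parametrized by `[0,1]`. -/
def IsGeodesic {X : Type*} [MetricSpace X] (γ : ℝ → X) : Prop :=
  ∀ s ∈ Icc (0 : ℝ) 1, ∀ t ∈ Icc (0 : ℝ) 1,
    dist (γ s) (γ t) = |s - t| * dist (γ 0) (γ 1)

/-- c-cyclical monotonicity for the cost `c = d²`. -/
def CyclicallyMonotone {X : Type*} [MetricSpace X] (Γ : Set (X × X)) : Prop :=
  ∀ (N : ℕ) (x y : Fin N → X), (∀ i, (x i, y i) ∈ Γ) → ∀ σ : Equiv.Perm (Fin N),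
    ∑ i, dist (x i) (y i) ^ 2 ≤ ∑ i, dist (x (σ i)) (y i) ^ 2

theorem cyclically_monotone_interpolation {X : Type*} [MetricSpace X] [CompleteSpace X]
    [TopologicalSpace.SeparableSpace X]
    (hgeo : ∀ x y : X, ∃ γ : ℝ → X, IsGeodesic γ ∧ γ 0 = x ∧ γ 1 = y)
    (Γ : Set (X × X)) (hΓ : CyclicallyMonotone Γ) (t : ℝ) (ht : t ∈ Icc (0 : ℝ) 1) :
    CyclicallyMonotone {p : X × X |
      ∃ γ : ℝ → X, IsGeodesic γ ∧ (γ 0, γ 1) ∈ Γ ∧ p = (γ 0, γ t)} := by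
  obtain ⟨ht0, ht1⟩ := ht
  intro N x y h σ
  choose γ hg hm heq using h
  have hx : ∀ i, x i = γ i 0 := fun i => (Prod.ext_iff.mp (heq i)).1
  have hy : ∀ i, y i = γ i t := fun i => (Prod.ext_iff.mp (heq i)).2
  set z : Fin N → X := fun i => γ i 1 with hz
  have h0 : (0:ℝ) ∈ Icc (0:ℝ) 1 := ⟨le_refl 0, zero_le_one⟩
  have h1 : (1:ℝ) ∈ Icc (0:ℝ) 1 := ⟨zero_le_one, le_refl 1⟩
  have htt : t ∈ Icc (0:ℝ) 1 := ⟨ht0, ht1⟩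
  -- distances along geodesics
  have hxy : ∀ i, dist (x i) (y i) = t * dist (x i) (z i) := by
    intro i
    rw [hx, hy]
    show dist (γ i 0) (γ i t) = t * dist (γ i 0) (γ i 1)
    rw [hg i 0 h0 t htt, abs_of_nonpos (by linarith : (0:ℝ) - t ≤ 0)]
    ring
  have hyz : ∀ i, dist (y i) (z i) = (1 - t) * dist (x i) (z i) := by
    intro i
    rw [hy]
    show dist (γ i t) (γ i 1) = (1 - t) * dist (x i) (z i)
    rw [hx]
    show dist (γ i t) (γ i 1) = (1 - t) * dist (γ i 0) (γ i 1)
    rw [hg i t htt 1 h1, abs_of_nonpos (by linarith : t - 1 ≤ 0)]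
    ring
  -- cyclical monotonicity of Γ at endpoints
  have hsum : ∑ i, dist (x i) (z i) ^ 2 ≤ ∑ i, dist (x (σ i)) (z i) ^ 2 := by
    refine hΓ N x z (fun i => ?_) σ
    rw [hx]; exact hm i
  -- pointwise key inequality
  have key : ∀ i, t * dist (x (σ i)) (z i) ^ 2 - t * (1 - t) * dist (x i) (z i) ^ 2
      ≤ dist (x (σ i)) (y i) ^ 2 := by
    intro i
    have htri : dist (x (σ i)) (z i) ≤ dist (x (σ i)) (y i) + (1 - t) * dist (x i) (z i) := by
      calc dist (x (σ i)) (z i) ≤ dist (x (σ i)) (y i) + dist (y i) (z i) := dist_triangle _ _ _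
        _ = dist (x (σ i)) (y i) + (1 - t) * dist (x i) (z i) := by rw [hyz]
    have hc : 0 ≤ dist (x (σ i)) (y i) := dist_nonneg
    have ha : 0 ≤ dist (x (σ i)) (z i) := dist_nonneg
    have hb : 0 ≤ dist (x i) (z i) := dist_nonneg
    set a := dist (x (σ i)) (z i)
    set b := dist (x i) (z i)
    set c := dist (x (σ i)) (y i)
    nlinarith [mul_nonneg (sub_nonneg.mpr ht1) (sq_nonneg (c - t * b)),
      mul_nonneg (mul_nonneg ht0 (by linarith : (0:ℝ) ≤ c + (1 - t) * b - a))
        (by nlinarith : (0:ℝ) ≤ c + (1 - t) * b + a)]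
  have h2 : ∑ i, (t * dist (x (σ i)) (z i) ^ 2 - t * (1 - t) * dist (x i) (z i) ^ 2)
      ≤ ∑ i, dist (x (σ i)) (y i) ^ 2 :=
    Finset.sum_le_sum fun i _ => key i
  have h3 : ∑ i, (t * dist (x (σ i)) (z i) ^ 2 - t * (1 - t) * dist (x i) (z i) ^ 2)
      = t * ∑ i, dist (x (σ i)) (z i) ^ 2 - t * (1 - t) * ∑ i, dist (x i) (z i) ^ 2 := by
    rw [Finset.sum_sub_distrib, Finset.mul_sum, Finset.mul_sum]
  have h4 : ∑ i, dist (x i) (y i) ^ 2 = t ^ 2 * ∑ i, dist (x i) (z i) ^ 2 := by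
    rw [Finset.mul_sum]
    exact Finset.sum_congr rfl fun i _ => by rw [hxy]; ring
  have h5 : t * ∑ i, dist (x i) (z i) ^ 2 ≤ t * ∑ i, dist (x (σ i)) (z i) ^ 2 :=
    mul_le_mul_of_nonneg_left hsum ht0
  nlinarith [h2, h3, h4, h5]
end

section
/- Let X be a Polish space, π a Borel probability measure on X × X with first marginal μ₀, and define A = {x ∈ X : there exist y¹ ≠ y² with (x, y¹), (x, y²) ∈ spt(π)}. If μ₀(A) = 0 and there exists a Borel map T : p₁(spt(π)) → X with (x, T(x)) ∈ spt(π) for all x in the first-coordinate projection p₁(spt(π)) of spt(π), then π = (id, T)_♯ μ₀, i.e., π is induced by the map T. -/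
open MeasureTheory

/-- The support of a measure on a metric space. -/
def measureSupport {Y : Type*} [MetricSpace Y] [MeasurableSpace Y]
    (π : Measure Y) : Set Y :=
  {p | ∀ ε > (0 : ℝ), 0 < π (Metric.ball p ε)}

lemma compl_measureSupport_null {Y : Type*} [MetricSpace Y] [MeasurableSpace Y]
    [OpensMeasurableSpace Y] [SecondCountableTopology Y]
    (π : Measure Y) : π (measureSupport π)ᶜ = 0 := by
  set S : Set (Set Y) := {s | IsOpen s ∧ π s = 0} with hS
  obtain ⟨T, hTc, hTS, hTU⟩ := TopologicalSpace.isOpen_sUnion_countable S (fun s hs => hs.1)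
  have hsub : (measureSupport π)ᶜ ⊆ ⋃₀ S := by
    intro p hp
    simp only [measureSupport, Set.mem_compl_iff, Set.mem_setOf_eq, not_forall] at hp
    obtain ⟨ε, hε, hball⟩ := hp
    push_neg at hball
    refine ⟨Metric.ball p ε, ⟨Metric.isOpen_ball, le_antisymm hball zero_le⟩,
      Metric.mem_ball_self hε⟩
  have hTnull : π (⋃₀ T) = 0 := by
    rw [Set.sUnion_eq_biUnion]
    exact (measure_biUnion_null_iff hTc).mpr (fun s hs => (hTS hs).2)
  refine le_antisymm ?_ zero_le
  calc π (measureSupport π)ᶜ ≤ π (⋃₀ T) := by rw [hTU]; exact measure_mono hsub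
    _ = 0 := hTnull

theorem plan_induced_by_selection {X : Type*} [MetricSpace X]
    [TopologicalSpace.SeparableSpace X] [CompleteSpace X]
    [MeasurableSpace X] [BorelSpace X]
    (π : Measure (X × X)) [IsProbabilityMeasure π]
    (μ₀ : Measure X) (hμ₀ : π.map Prod.fst = μ₀)
    (hA : μ₀ {x : X | ∃ y₁ y₂ : X, y₁ ≠ y₂ ∧
      (x, y₁) ∈ measureSupport π ∧ (x, y₂) ∈ measureSupport π} = 0)
    (T : X → X) (hT : Measurable T)
    (hTsel : ∀ x ∈ Prod.fst '' measureSupport π, (x, T x) ∈ measureSupport π) :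
    π = μ₀.map (fun x => (x, T x)) := by
  set A : Set X := {x : X | ∃ y₁ y₂ : X, y₁ ≠ y₂ ∧
      (x, y₁) ∈ measureSupport π ∧ (x, y₂) ∈ measureSupport π} with hAdef
  set B : Set X := toMeasurable μ₀ A with hBdef
  have hAB : A ⊆ B := subset_toMeasurable μ₀ A
  have hBnull : μ₀ B = 0 := by rw [hBdef, measure_toMeasurable]; exact hA
  have hBmeas : MeasurableSet B := measurableSet_toMeasurable μ₀ A
  have hpre : π (Prod.fst ⁻¹' B) = 0 := by
    have := Measure.map_apply (μ := π) measurable_fst hBmeas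
    rw [hμ₀] at this
    rw [← this, hBnull]
  have h1 : ∀ᵐ p ∂π, p ∈ measureSupport π := compl_measureSupport_null π
  have h2 : ∀ᵐ p : X × X ∂π, p.1 ∉ B := by
    rw [ae_iff]
    simpa [Set.preimage] using hpre
  have hae : (fun p : X × X => p) =ᵐ[π] (fun p => (p.1, T p.1)) := by
    filter_upwards [h1, h2] with p hp hpB
    have hx : p.1 ∈ Prod.fst '' measureSupport π := ⟨p, hp, rfl⟩
    have hTx : (p.1, T p.1) ∈ measureSupport π := hTsel _ hx
    have : p.2 = T p.1 := by
      by_contra hne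
      exact hpB (hAB ⟨p.2, T p.1, hne, hp, hTx⟩)
    ext <;> simp [this]
  have hmeas : Measurable (fun x : X => (x, T x)) := measurable_id.prodMk hT
  calc π = π.map (fun p : X × X => p) := (Measure.map_id).symm
    _ = π.map (fun p : X × X => (p.1, T p.1)) := Measure.map_congr hae
    _ = (π.map Prod.fst).map (fun x => (x, T x)) :=
        (Measure.map_map hmeas measurable_fst).symm
    _ = μ₀.map (fun x => (x, T x)) := by rw [hμ₀]
end
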